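/- For a reachability objective in the optimistic backward responsibility setting, all states with positive responsibility have the same responsibility value; formally, there exists a rational r ∈ [0,1] such that the optimistic responsibility of every state lies in {0, r}. -/

import Mathlib

/-- The engraving construction: all transitions of states on the run `ρ` that are not
in the coalition `C` are removed, except the one following `ρ`. -/
def Engrave {S : Type*} (tr : S → S → Prop) (ρ : ℕ → S) (C : Set S) : S → S → Prop :=
  fun s t => (tr s t ∧ ¬(s ∈ Set.range ρ ∧ s ∉ C)) ∨ ∃ i, ρ i = s ∧ ρ (i + 1) = t ∧ s ∉ C

/-- Player Sat (with positional strategies, controlling the states in `C`)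
wins the game on arena `tr` with objective `Ω` from state `init`. -/
def Wins {S : Type*} (tr : S → S → Prop) (C : Set S) (Ω : (ℕ → S) → Prop) (init : S) : Prop :=
  ∃ σ : S → S, (∀ s, tr s (σ s)) ∧
    ∀ π : ℕ → S, π 0 = init →
      (∀ i, tr (π i) (π (i + 1)) ∧ (π i ∈ C → π (i + 1) = σ (π i))) → Ω π

/-- A run is simple lasso-shaped. -/
def SimpleLasso {S : Type*} (ρ : ℕ → S) : Prop :=
  ∃ k ℓ : ℕ, 0 < ℓ ∧ (∀ i, k ≤ i → ρ (i + ℓ) = ρ i) ∧ Set.InjOn ρ (Set.Iio (k + ℓ))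

def SafetyObj {S : Type*} (F : Set S) : (ℕ → S) → Prop := fun π => ∀ i, π i ∉ F

def ReachObj {S : Type*} (F : Set S) : (ℕ → S) → Prop := fun π => ∃ i, π i ∈ F

def BuchiObj {S : Type*} (F : Set S) : (ℕ → S) → Prop := fun π => ∀ i, ∃ j, i ≤ j ∧ π j ∈ F

/-- The Shapley value of agent `a` in the cooperative game `γ`. -/
noncomputable def shapley {α : Type*} [Fintype α] [DecidableEq α]
    (γ : Finset α → ℚ) (a : α) : ℚ :=
  ∑ C ∈ (Finset.univ.erase a).powerset,
    (((Fintype.card α - C.card - 1).factorial * C.card.factorial : ℚ) /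
      ((Fintype.card α).factorial : ℚ)) * (γ (insert a C) - γ C)

namespace RespAux

variable {S : Type*} {tr : S → S → Prop} {ρ : ℕ → S}

lemma lasso_succ (hl : SimpleLasso ρ) {a b : ℕ} (h : ρ a = ρ b) : ρ (a + 1) = ρ (b + 1) := by
  obtain ⟨k, ℓ, hℓ, hper, hinj⟩ := hl
  have red : ∀ i, ∃ i', i' < k + ℓ ∧ ρ i' = ρ i ∧ ρ (i' + 1) = ρ (i + 1) := by
    intro i
    induction i using Nat.strong_induction_on with
    | _ i IH =>
      by_cases hi : i < k + ℓ
      · exact ⟨i, hi, rfl, rfl⟩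
      · push_neg at hi
        obtain ⟨i', h1, h2, h3⟩ := IH (i - ℓ) (by omega)
        refine ⟨i', h1, ?_, ?_⟩
        · rw [h2]
          have := hper (i - ℓ) (by omega)
          rw [show i - ℓ + ℓ = i by omega] at this
          exact this.symm
        · rw [h3]
          have := hper (i - ℓ + 1) (by omega)
          rw [show i - ℓ + 1 + ℓ = i + 1 by omega] at this
          exact this.symm
  obtain ⟨a', ha1, ha2, ha3⟩ := red a
  obtain ⟨b', hb1, hb2, hb3⟩ := red b
  have hab : a' = b' := hinj (Set.mem_Iio.mpr ha1) (Set.mem_Iio.mpr hb1) (by rw [ha2, hb2, h])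
  rw [← ha3, ← hb3, hab]

lemma engrave_tr (hrun : ∀ i, tr (ρ i) (ρ (i + 1))) {Cs : Set S} {s t : S}
    (h : Engrave tr ρ Cs s t) : tr s t := by
  rcases h with ⟨h1, _⟩ | ⟨i, h1, h2, _⟩
  · exact h1
  · rw [← h1, ← h2]; exact hrun i

lemma engrave_mono (hrun : ∀ i, tr (ρ i) (ρ (i + 1))) {C D : Set S} (hCD : C ⊆ D)
    {s t : S} (h : Engrave tr ρ C s t) : Engrave tr ρ D s t := by
  rcases h with ⟨h1, h2⟩ | ⟨i, h1, h2, h3⟩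
  · exact Or.inl ⟨h1, fun hx => h2 ⟨hx.1, fun hc => hx.2 (hCD hc)⟩⟩
  · by_cases hs : s ∈ D
    · refine Or.inl ⟨?_, fun hx => hx.2 hs⟩
      rw [← h1, ← h2]; exact hrun i
    · exact Or.inr ⟨i, h1, h2, hs⟩

lemma engrave_total (htotal : ∀ s, ∃ t, tr s t) (Cs : Set S) (s : S) :
    ∃ t, Engrave tr ρ Cs s t := by
  by_cases hs : s ∈ Set.range ρ ∧ s ∉ Cs
  · obtain ⟨i, hi⟩ := hs.1
    exact ⟨ρ (i + 1), Or.inr ⟨i, hi, rfl, hs.2⟩⟩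
  · obtain ⟨t, ht⟩ := htotal s
    exact ⟨t, Or.inl ⟨ht, hs⟩⟩

lemma engrave_forced {Cs : Set S} {s t : S} (hr : s ∈ Set.range ρ) (hc : s ∉ Cs)
    (h : Engrave tr ρ Cs s t) : ∃ i, ρ i = s ∧ t = ρ (i + 1) := by
  rcases h with ⟨_, h2⟩ | ⟨i, h1, h2, _⟩
  · exact absurd ⟨hr, hc⟩ h2
  · exact ⟨i, h1, h2.symm⟩

lemma run_path (hrun : ∀ i, tr (ρ i) (ρ (i + 1))) (D : Set S) (m : ℕ) :
    Relation.ReflTransGen (Engrave tr ρ D) (ρ 0) (ρ m) := by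
  induction m with
  | zero => exact .refl
  | succ m ih =>
    refine ih.tail ?_
    by_cases hs : ρ m ∈ D
    · exact Or.inl ⟨hrun m, fun h => h.2 hs⟩
    · exact Or.inr ⟨m, rfl, rfl, hs⟩

lemma wins_to_reach {E : S → S → Prop} (hE : ∀ s, ∃ t, E s t) {Ctrl F : Set S} {init : S}
    (h : Wins E Ctrl (ReachObj F) init) : ∃ f, f ∈ F ∧ Relation.ReflTransGen E init f := by
  classical
  obtain ⟨σ, hσ, hwin⟩ := h
  let π : ℕ → S := fun n =>
    Nat.rec init (fun _ s => if s ∈ Ctrl then σ s else Classical.choose (hE s)) n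
  have hstep : ∀ n, π (n + 1) = if π n ∈ Ctrl then σ (π n) else Classical.choose (hE (π n)) :=
    fun _ => rfl
  have hcons : ∀ i, E (π i) (π (i + 1)) ∧ (π i ∈ Ctrl → π (i + 1) = σ (π i)) := by
    intro i
    rw [hstep]
    by_cases h : π i ∈ Ctrl
    · rw [if_pos h]; exact ⟨hσ _, fun _ => rfl⟩
    · rw [if_neg h]; exact ⟨Classical.choose_spec (hE (π i)), fun hc => absurd hc h⟩
  obtain ⟨m, hm⟩ := hwin π rfl hcons
  refine ⟨π m, hm, ?_⟩
  clear hm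
  induction m with
  | zero => exact .refl
  | succ m ih => exact ih.tail (hcons m).1

lemma empty_stays_on_run {a f : S} (h : Relation.ReflTransGen (Engrave tr ρ (∅ : Set S)) a f)
    (ha : a ∈ Set.range ρ) : f ∈ Set.range ρ := by
  induction h with
  | refl => exact ha
  | tail hp hedge IH =>
    rcases hedge with ⟨_, h2⟩ | ⟨i, _, h2, _⟩
    · exact absurd ⟨IH, Set.notMem_empty _⟩ h2
    · exact ⟨i + 1, h2⟩

lemma key_split (hrun : ∀ i, tr (ρ i) (ρ (i + 1))) {Cs : Set S} {a f : S}
    (h : Relation.ReflTransGen (Engrave tr ρ Cs) a f) :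
    Relation.ReflTransGen (Engrave tr ρ (∅ : Set S)) a f ∨
      ∃ s, s ∈ Cs ∧ s ∈ Set.range ρ ∧
        Relation.ReflTransGen (Engrave tr ρ ({s} : Set S)) s f := by
  induction h using Relation.ReflTransGen.head_induction_on with
  | refl => exact Or.inl .refl
  | head hac hcf IH =>
    rename_i a c
    by_cases har : a ∈ Set.range ρ
    · by_cases haC : a ∈ Cs
      · rcases IH with IH | ⟨s, hs1, hs2, hp⟩
        · refine Or.inr ⟨a, haC, har, Relation.ReflTransGen.head ?_ (Relation.ReflTransGen.mono (fun x y hxy =>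
            engrave_mono hrun (Set.empty_subset _) hxy) _ _ IH)⟩
          exact Or.inl ⟨engrave_tr hrun hac, fun hx => hx.2 rfl⟩
        · exact Or.inr ⟨s, hs1, hs2, hp⟩
      · obtain ⟨i, hi1, hi2⟩ := engrave_forced har haC hac
        rcases IH with IH | ⟨s, hs1, hs2, hp⟩
        · exact Or.inl (Relation.ReflTransGen.head
            (Or.inr ⟨i, hi1, hi2.symm, Set.notMem_empty _⟩) IH)
        · exact Or.inr ⟨s, hs1, hs2, hp⟩
    · rcases IH with IH | ⟨s, hs1, hs2, hp⟩
      · exact Or.inl (Relation.ReflTransGen.head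
          (Or.inl ⟨engrave_tr hrun hac, fun hx => har hx.1⟩) IH)
      · exact Or.inr ⟨s, hs1, hs2, hp⟩

lemma reach_to_wins (htotal : ∀ s, ∃ t, tr s t) (hrun : ∀ i, tr (ρ i) (ρ (i + 1)))
    (hlasso : SimpleLasso ρ) (Cs : Set S) (F : Set S) {init f : S}
    (hf : f ∈ F) (hpath : Relation.ReflTransGen (Engrave tr ρ Cs) init f) :
    Wins (Engrave tr ρ Cs) (Cs ∪ {t | t ∉ Set.range ρ}) (ReachObj F) init := by
  classical
  set E := Engrave tr ρ Cs with hE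
  let Rset : ℕ → Set S := fun n =>
    Nat.rec F (fun _ R => R ∪ {s | ∃ t, E s t ∧ t ∈ R}) n
  have hR0 : Rset 0 = F := rfl
  have hRsucc : ∀ n, Rset (n + 1) = Rset n ∪ {s | ∃ t, E s t ∧ t ∈ Rset n} := fun _ => rfl
  have hmono : ∀ {m n : ℕ}, m ≤ n → Rset m ⊆ Rset n := by
    intro m n h
    induction h with
    | refl => exact subset_rfl
    | step _ ih => exact fun x hx => Or.inl (ih hx)
  have hmem : ∀ a, Relation.ReflTransGen E a f → ∃ n, a ∈ Rset n := by
    intro a h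
    induction h using Relation.ReflTransGen.head_induction_on with
    | refl => exact ⟨0, hf⟩
    | head hab _ IH =>
      obtain ⟨n, hn⟩ := IH
      exact ⟨n + 1, Or.inr ⟨_, hab, hn⟩⟩
  have sigma_exists : ∀ s, ∃ t, E s t ∧ ∀ n, s ∈ Rset (n + 1) → s ∉ F → t ∈ Rset n := by
    intro s
    rcases Classical.em (∃ n, s ∈ Rset n) with hA | hA
    · by_cases hF : s ∈ F
      · obtain ⟨t, ht⟩ := engrave_total htotal Cs s
        exact ⟨t, ht, fun n _ h => absurd hF h⟩
      · obtain ⟨m, hm, hmin⟩ := (wellFounded_lt (α := ℕ)).has_min {n | s ∈ Rset n} hA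
        match m, hm, hmin with
        | 0, hm, _ => exact absurd hm hF
        | m' + 1, hm, hmin =>
          have hnot : s ∉ Rset m' := fun h => hmin m' h (by omega)
          rcases hm with hm | ⟨t, ht, htR⟩
          · exact absurd hm hnot
          · refine ⟨t, ht, fun n hn _ => ?_⟩
            have h1 : ¬ (n + 1 < m' + 1) := fun h => hmin (n + 1) hn h
            exact hmono (by omega) htR
    · obtain ⟨t, ht⟩ := engrave_total htotal Cs s
      exact ⟨t, ht, fun n hn _ => absurd ⟨n + 1, hn⟩ hA⟩
  refine ⟨fun s => Classical.choose (sigma_exists s),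
    fun s => (Classical.choose_spec (sigma_exists s)).1, ?_⟩
  intro π hπ0 hcons
  obtain ⟨N, hN⟩ := hmem init hpath
  rw [← hπ0] at hN
  suffices hkey : ∀ n i, π i ∈ Rset n → ∃ j, π j ∈ F by exact hkey N 0 hN
  intro n
  induction n using Nat.strong_induction_on with
  | _ n IH =>
    intro i hi
    by_cases hF : π i ∈ F
    · exact ⟨i, hF⟩
    match n with
    | 0 => exact absurd hi hF
    | n' + 1 =>
      rcases hi with hi | ⟨t, ht, htR⟩
      · exact IH n' (by omega) i hi
      · by_cases hc : π i ∈ Cs ∪ {t | t ∉ Set.range ρ}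
        · have heq := (hcons i).2 hc
          have hspec := (Classical.choose_spec (sigma_exists (π i))).2 n'
            (Or.inr ⟨t, ht, htR⟩) hF
          refine IH n' (by omega) (i + 1) ?_
          rw [heq]; exact hspec
        · have hr : π i ∈ Set.range ρ := by
            by_contra hr
            exact hc (Or.inr hr)
          have hnc : π i ∉ Cs := fun h => hc (Or.inl h)
          obtain ⟨b, hb1, hb2⟩ := engrave_forced hr hnc ht
          obtain ⟨a, ha1, ha2⟩ := engrave_forced hr hnc (hcons i).1
          have : π (i + 1) = t := by
            rw [ha2, hb2]
            exact lasso_succ hlasso (ha1.trans hb1.symm)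
          refine IH n' (by omega) (i + 1) ?_
          rw [this]; exact htR

end RespAux

/-- For reachability objectives, all states with positive optimistic backward
responsibility have the same responsibility value: there is a rational `r ∈ [0,1]`
such that every state's responsibility lies in `{0, r}`. -/
theorem reach_optimistic_responsibility_two_valued {S : Type*} [Fintype S] [DecidableEq S]
    (tr : S → S → Prop) (htotal : ∀ s, ∃ t, tr s t)
    (init : S) (F : Set S) (ρ : ℕ → S)
    (hrun0 : ρ 0 = init) (hrun : ∀ i, tr (ρ i) (ρ (i + 1)))
    (hlasso : SimpleLasso ρ) (hviol : ∀ i, ρ i ∉ F)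
    (γ : Finset S → ℚ)
    (hγ : ∀ C : Finset S,
      (γ C = 1 ↔
        Wins (Engrave tr ρ (↑C : Set S)) ((↑C : Set S) ∪ {t | t ∉ Set.range ρ})
          (ReachObj F) init) ∧
      (γ C = 0 ∨ γ C = 1)) :
    ∃ r : ℚ, 0 ≤ r ∧ r ≤ 1 ∧ ∀ s : S, shapley γ s = 0 ∨ shapley γ s = r := by
  classical
  have hReach : ∀ C : Finset S, γ C = 1 ↔
      ∃ f, f ∈ F ∧ Relation.ReflTransGen (Engrave tr ρ (↑C : Set S)) init f := by
    intro C
    rw [(hγ C).1]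
    constructor
    · exact RespAux.wins_to_reach (RespAux.engrave_total htotal _)
    · rintro ⟨f, hf, hp⟩
      exact RespAux.reach_to_wins htotal hrun hlasso _ F hf hp
  have hsingle : ∀ C : Finset S, γ C = 1 ↔ ∃ s ∈ C, γ {s} = 1 := by
    intro C
    rw [hReach C]
    constructor
    · rintro ⟨f, hf, hp⟩
      rcases RespAux.key_split hrun hp with hp0 | ⟨s, hsC, ⟨m, hm⟩, hp1⟩
      · exfalso
        obtain ⟨i, hi⟩ := RespAux.empty_stays_on_run hp0 ⟨0, hrun0⟩
        exact hviol i (hi ▸ hf)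
      · refine ⟨s, hsC, ?_⟩
        rw [hReach {s}]
        refine ⟨f, hf, ?_⟩
        rw [Finset.coe_singleton]
        have h1 : Relation.ReflTransGen (Engrave tr ρ ({s} : Set S)) init s := by
          rw [← hrun0, ← hm]; exact RespAux.run_path hrun _ m
        exact h1.trans hp1
    · rintro ⟨s, hsC, hs1⟩
      rw [hReach {s}] at hs1
      obtain ⟨f, hf, hp⟩ := hs1
      refine ⟨f, hf, Relation.ReflTransGen.mono (fun x y hxy => ?_) _ _ hp⟩
      refine RespAux.engrave_mono hrun ?_ hxy
      rw [Finset.coe_singleton]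
      exact Set.singleton_subset_iff.mpr hsC
  set Rf : Finset S := Finset.univ.filter (fun s => γ {s} = 1) with hRfdef
  have gval : ∀ C : Finset S, γ C = if (C ∩ Rf).Nonempty then 1 else 0 := by
    intro C
    rcases (hγ C).2 with h0 | h1
    · rw [h0, if_neg]
      rintro ⟨s, hs⟩
      rw [Finset.mem_inter, hRfdef, Finset.mem_filter] at hs
      have : γ C = 1 := (hsingle C).mpr ⟨s, hs.1, hs.2.2⟩
      rw [h0] at this; norm_num at this
    · rw [h1, if_pos]
      obtain ⟨s, hsC, hs1⟩ := (hsingle C).mp h1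
      exact ⟨s, Finset.mem_inter.mpr ⟨hsC, by rw [hRfdef, Finset.mem_filter]; exact ⟨Finset.mem_univ _, hs1⟩⟩⟩
  have hzero : ∀ a, a ∉ Rf → shapley γ a = 0 := by
    intro a ha
    simp only [shapley]
    refine Finset.sum_eq_zero fun C hC => ?_
    have : γ (insert a C) = γ C := by
      rw [gval, gval, Finset.insert_inter_of_notMem ha]
    rw [this, sub_self, mul_zero]
  set r0 : ℚ := ∑ C ∈ (Finset.univ \ Rf).powerset,
    (((Fintype.card S - C.card - 1).factorial * C.card.factorial : ℚ) /
      ((Fintype.card S).factorial : ℚ)) with hr0def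
  have wnonneg : ∀ k : ℕ, (0:ℚ) ≤ ((Fintype.card S - k - 1).factorial * k.factorial : ℚ) /
      ((Fintype.card S).factorial : ℚ) := by
    intro k
    positivity
  have rnonneg : 0 ≤ r0 := Finset.sum_nonneg fun C _ => wnonneg C.card
  have hval : ∀ a, a ∈ Rf → shapley γ a = r0 := by
    intro a ha
    simp only [shapley]
    have hterm : ∀ C ∈ (Finset.univ.erase a).powerset,
        (((Fintype.card S - C.card - 1).factorial * C.card.factorial : ℚ) /
          ((Fintype.card S).factorial : ℚ)) * (γ (insert a C) - γ C)
        = if ¬ (C ∩ Rf).Nonempty then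
            (((Fintype.card S - C.card - 1).factorial * C.card.factorial : ℚ) /
              ((Fintype.card S).factorial : ℚ)) else 0 := by
      intro C hC
      have h1 : γ (insert a C) = 1 := by
        rw [gval, if_pos ⟨a, Finset.mem_inter.mpr ⟨Finset.mem_insert_self _ _, ha⟩⟩]
      rw [h1, gval C]
      by_cases hne : (C ∩ Rf).Nonempty
      · rw [if_pos hne, if_neg (not_not_intro hne), sub_self, mul_zero]
      · rw [if_neg hne, if_pos hne, sub_zero, mul_one]
    rw [Finset.sum_congr rfl hterm, ← Finset.sum_filter]
    have hfilter : (Finset.univ.erase a).powerset.filter (fun C => ¬ (C ∩ Rf).Nonempty)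
        = (Finset.univ \ Rf).powerset := by
      ext C
      simp only [Finset.mem_filter, Finset.mem_powerset, Finset.not_nonempty_iff_eq_empty]
      constructor
      · rintro ⟨hsub, hempty⟩ x hx
        refine Finset.mem_sdiff.mpr ⟨Finset.mem_univ _, fun hxR => ?_⟩
        have hmem : x ∈ C ∩ Rf := Finset.mem_inter.mpr ⟨hx, hxR⟩
        rw [hempty] at hmem
        exact absurd hmem (Finset.notMem_empty _)
      · intro hsub
        constructor
        · intro x hx
          have hx' := hsub hx
          rw [Finset.mem_sdiff] at hx'
          exact Finset.mem_erase.mpr ⟨fun he => hx'.2 (he ▸ ha), Finset.mem_univ _⟩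
        · refine Finset.eq_empty_iff_forall_notMem.mpr fun x hx => ?_
          rw [Finset.mem_inter] at hx
          have hx' := hsub hx.1
          rw [Finset.mem_sdiff] at hx'
          exact hx'.2 hx.2
    rw [hfilter, hr0def]
  by_cases hRf : Rf.Nonempty
  · obtain ⟨a₀, ha₀⟩ := hRf
    have hn : 0 < Fintype.card S := Fintype.card_pos_iff.mpr ⟨init⟩
    have hone : ∑ C ∈ (Finset.univ.erase a₀).powerset,
        (((Fintype.card S - C.card - 1).factorial * C.card.factorial : ℚ) /
          ((Fintype.card S).factorial : ℚ)) = 1 := by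
      set n := Fintype.card S with hndef
      have hcerase : (Finset.univ.erase a₀).card = n - 1 := by
        rw [Finset.card_erase_of_mem (Finset.mem_univ _), Finset.card_univ]
      rw [Finset.sum_powerset_apply_card
        (f := fun k => (((n - k - 1).factorial * k.factorial : ℚ) / (n.factorial : ℚ)))]
      rw [hcerase, show n - 1 + 1 = n from by omega]
      have hstep : ∀ i ∈ Finset.range n,
          (n - 1).choose i • (((n - i - 1).factorial * i.factorial : ℚ) / (n.factorial : ℚ))
            = ((n - 1).factorial : ℚ) / (n.factorial : ℚ) := by
        intro i hi
        rw [Finset.mem_range] at hi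
        have hkey : ((n - 1).choose i) * ((n - 1 - i).factorial * i.factorial)
            = (n - 1).factorial := by
          rw [← Nat.choose_mul_factorial_mul_factorial (show i ≤ n - 1 from by omega)]
          ring
        rw [nsmul_eq_mul, show n - i - 1 = n - 1 - i from by omega]
        calc ((n - 1).choose i : ℚ) * (((n - 1 - i).factorial * i.factorial : ℚ) / (n.factorial : ℚ))
            = ((((n - 1).choose i) * ((n - 1 - i).factorial * i.factorial) : ℕ) : ℚ) /
              (n.factorial : ℚ) := by push_cast; ring
          _ = _ := by rw [hkey]
      rw [Finset.sum_congr rfl hstep, Finset.sum_const, Finset.card_range, nsmul_eq_mul]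
      rw [← mul_div_assoc, ← Nat.cast_mul, Nat.mul_factorial_pred hn.ne',
        div_self (Nat.cast_ne_zero.mpr n.factorial_ne_zero)]
    have hsubset : Finset.univ \ Rf ⊆ Finset.univ.erase a₀ := by
      intro x hx
      rw [Finset.mem_sdiff] at hx
      exact Finset.mem_erase.mpr ⟨fun he => hx.2 (he ▸ ha₀), Finset.mem_univ _⟩
    have hle : r0 ≤ 1 := by
      rw [hr0def, ← hone]
      exact Finset.sum_le_sum_of_subset_of_nonneg (Finset.powerset_mono.mpr hsubset)
        (fun C _ _ => wnonneg C.card)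
    refine ⟨r0, rnonneg, hle, fun s => ?_⟩
    by_cases hs : s ∈ Rf
    · exact Or.inr (hval s hs)
    · exact Or.inl (hzero s hs)
  · refine ⟨0, le_refl _, zero_le_one, fun s => Or.inl (hzero s fun h => hRf ⟨s, h⟩)⟩
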